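/- Let e, x_1, ..., x_n be elements of a ring R with e^2 = e, and let i_1, ..., i_n be non-negative integers. Then e · x_1^{i_1} ⋯ x_n^{i_n} lies in the additive subgroup generated by elements of the form r · e · [e, x̄]_{k_1,...,k_n} with 0 ≤ k_j ≤ i_j for each j, where r ranges over R with an adjoined identity (i.e., e · x_1^{i_1} ⋯ x_n^{i_n} can be written as a sum of terms each ending in e·[e,x̄]_{k_1,...,k_n}). -/

import Mathlib

/-- Iterated commutator: `itc a b 0 = a`, `itc a b (k+1) = [itc a b k, b]`. -/
def itc {R : Type*} [Ring R] (a b : R) : ℕ → R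
  | 0 => a
  | k + 1 => itc a b k * b - b * itc a b k

/-- Multi-iterated commutator `[a, b̄]_{k_1,…,k_n}` along a list of pairs `(b, k)`. -/
def mitc {R : Type*} [Ring R] (a : R) : List (R × ℕ) → R
  | [] => a
  | (b, k) :: t => mitc (itc a b k) t

namespace Stmt7Aux

variable {R : Type*} [Ring R]

open AddSubgroup

/-- Product `b₁^{k₁}⋯b_n^{k_n}` of a list of pairs. -/
def PP (L : List (R × ℕ)) : R := (L.map fun p => p.1 ^ p.2).prod

@[simp] lemma PP_nil : PP ([] : List (R × ℕ)) = 1 := rfl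

@[simp] lemma PP_cons (b : R) (k : ℕ) (T : List (R × ℕ)) :
    PP ((b, k) :: T) = b ^ k * PP T := by
  simp [PP]

/-- Sandwich multiplication preserves closure membership provided it does so
on generators. -/
lemma conj_mem_closure {S S' : Set R} (u v : R)
    (h : ∀ s ∈ S, u * s * v ∈ closure S') {x : R} (hx : x ∈ closure S) :
    u * x * v ∈ closure S' := by
  induction hx using AddSubgroup.closure_induction with
  | mem s hs => exact h s hs
  | zero => simpa using zero_mem _
  | add a b _ _ ha hb =>
      have hab : u * (a + b) * v = u * a * v + u * b * v := by noncomm_ring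
      rw [hab]; exact add_mem ha hb
  | neg a _ ha =>
      have hna : u * (-a) * v = -(u * a * v) := by noncomm_ring
      rw [hna]; exact neg_mem ha

/-- Key one-variable lemma: `[a,b]_k` differs from `a·b^k` by a sum of terms
`w·a·b^l` with `l < k`. -/
lemma lemF (a b : R) : ∀ k : ℕ,
    itc a b k - a * b ^ k ∈
      closure {y : R | ∃ w : R, ∃ l : ℕ, l < k ∧ y = w * (a * b ^ l)} := by
  intro k
  induction k with
  | zero => simpa [itc] using zero_mem _
  | succ k ih =>
      set c := itc a b k with hc
      have hid : itc a b (k + 1) - a * b ^ (k + 1) =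
          (1 * (c - a * b ^ k) * b - b * (c - a * b ^ k) * 1) - b * (a * b ^ k) := by
        show c * b - b * c - a * b ^ (k + 1) = _
        rw [pow_succ]; noncomm_ring
      rw [hid]
      refine sub_mem (sub_mem ?_ ?_) ?_
      · refine conj_mem_closure 1 b ?_ ih
        rintro s ⟨w, l, hl, rfl⟩
        refine subset_closure ⟨w, l + 1, by omega, ?_⟩
        rw [pow_succ]; noncomm_ring
      · refine conj_mem_closure b 1 ?_ ih
        rintro s ⟨w, l, hl, rfl⟩
        refine subset_closure ⟨b * w, l, by omega, by noncomm_ring⟩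
      · exact subset_closure ⟨b, k, by omega, rfl⟩

/-- Pointwise relation on pairs: same ring element, smaller-or-equal exponent. -/
def le2 (m l : R × ℕ) : Prop := m.1 = l.1 ∧ m.2 ≤ l.2

/-- Key multivariable lemma: `[a, b̄]_{k̄}` differs from `a·b₁^{k₁}⋯b_n^{k_n}`
by a sum of terms `w·a·b₁^{l₁}⋯b_n^{l_n}` with `l̄ ≤ k̄`, `l̄ ≠ k̄`. -/
lemma lemE : ∀ (L : List (R × ℕ)) (a : R),
    mitc a L - a * PP L ∈
      closure {y : R | ∃ w : R, ∃ M : List (R × ℕ),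
        List.Forall₂ le2 M L ∧ M ≠ L ∧ y = w * (a * PP M)} := by
  intro L
  induction L with
  | nil => intro a; simpa [mitc] using zero_mem _
  | cons p T ih =>
      obtain ⟨b, k⟩ := p
      intro a
      set c := itc a b k with hc
      set SL : Set R := {y : R | ∃ w : R, ∃ M : List (R × ℕ),
        List.Forall₂ le2 M ((b, k) :: T) ∧ M ≠ (b, k) :: T ∧ y = w * (a * PP M)} with hSL
      have hmitc : mitc a ((b, k) :: T) = mitc c T := rfl
      have hid : mitc a ((b, k) :: T) - a * PP ((b, k) :: T) =
          1 * (mitc c T - c * PP T) * 1 + 1 * (c - a * b ^ k) * PP T := by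
        rw [hmitc, PP_cons]; noncomm_ring
      rw [hid]
      have hTrefl : List.Forall₂ le2 T T :=
        List.forall₂_same.mpr fun z _ => ⟨rfl, le_refl _⟩
      have headne : ∀ (l : ℕ) (M' : List (R × ℕ)), l < k → (b, l) :: M' ≠ (b, k) :: T := by
        intro l M' hl hEq
        have h1 := (List.cons.injEq _ _ _ _).mp hEq
        have h2 := (Prod.mk.injEq _ _ _ _).mp h1.1
        omega
      refine add_mem ?_ ?_
      · -- mitc c T - c * PP T
        refine conj_mem_closure 1 1 ?_ (ih c)
        rintro s ⟨w, M', hM', hne', rfl⟩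
        have h1 : (1 : R) * (w * (c * PP M')) * 1 =
            w * (c - a * b ^ k) * PP M' + w * (a * PP ((b, k) :: M')) := by
          rw [PP_cons]; noncomm_ring
        rw [h1]
        refine add_mem ?_ ?_
        · -- w * (c - a b^k) * PP M'
          refine conj_mem_closure w (PP M') ?_ (lemF a b k)
          rintro s ⟨w', l, hl, rfl⟩
          refine subset_closure ⟨w * w', (b, l) :: M', ?_, headne l M' hl, ?_⟩
          · exact List.Forall₂.cons ⟨rfl, le_of_lt hl⟩ hM'
          · rw [PP_cons]; noncomm_ring
        · -- w * (a * PP ((b,k)::M'))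
          refine subset_closure ⟨w, (b, k) :: M', ?_, ?_, rfl⟩
          · exact List.Forall₂.cons ⟨rfl, le_refl _⟩ hM'
          · intro hEq
            exact hne' ((List.cons.injEq _ _ _ _).mp hEq).2
      · -- (c - a b^k) * PP T
        refine conj_mem_closure 1 (PP T) ?_ (lemF a b k)
        rintro s ⟨w, l, hl, rfl⟩
        refine subset_closure ⟨1 * w, (b, l) :: T, ?_, headne l T hl, ?_⟩
        · exact List.Forall₂.cons ⟨rfl, le_of_lt hl⟩ hTrefl
        · rw [PP_cons]; noncomm_ring

end Stmt7Aux

/-- For idempotent `e`, `e·x_1^{i_1}⋯x_n^{i_n}` lies in the additive subgroup generated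
by elements `r · e · [e,x̄]_{k_1,…,k_n}` with `k_j ≤ i_j`, where `r` ranges over `R`
with an adjoined identity. -/
theorem stmt_7 {R : Type*} [Ring R] (n : ℕ) (e : R) (x : Fin n → R)
    (he : e * e = e) (i : Fin n → ℕ) :
    e * (List.ofFn fun j => x j ^ i j).prod ∈
      AddSubgroup.closure {y : R | ∃ k : Fin n → ℕ, (∀ j, k j ≤ i j) ∧
        ((∃ r : R, y = r * (e * mitc e (List.ofFn fun j => (x j, k j)))) ∨
          y = e * mitc e (List.ofFn fun j => (x j, k j)))} := by
  classical
  suffices H : ∀ (N : ℕ) (i : Fin n → ℕ), (∑ j, i j) = N →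
      e * (List.ofFn fun j => x j ^ i j).prod ∈
        AddSubgroup.closure {y : R | ∃ k : Fin n → ℕ, (∀ j, k j ≤ i j) ∧
          ((∃ r : R, y = r * (e * mitc e (List.ofFn fun j => (x j, k j)))) ∨
            y = e * mitc e (List.ofFn fun j => (x j, k j)))} from H _ i rfl
  intro N
  induction N using Nat.strong_induction_on with
  | _ N ih =>
    intro i hiN
    set L : List (R × ℕ) := List.ofFn fun j => (x j, i j) with hL
    set S : Set R := {y : R | ∃ k : Fin n → ℕ, (∀ j, k j ≤ i j) ∧
        ((∃ r : R, y = r * (e * mitc e (List.ofFn fun j => (x j, k j)))) ∨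
          y = e * mitc e (List.ofFn fun j => (x j, k j)))} with hS
    -- the closure of `S` absorbs left multiplication
    have habs : ∀ (u : R), ∀ s ∈ S, u * s * 1 ∈ AddSubgroup.closure S := by
      rintro u s ⟨k', hk', hs⟩
      rcases hs with ⟨r, rfl⟩ | rfl
      · refine AddSubgroup.subset_closure ⟨k', hk', Or.inl ⟨u * r, by noncomm_ring⟩⟩
      · refine AddSubgroup.subset_closure ⟨k', hk', Or.inl ⟨u, by noncomm_ring⟩⟩
    have hPP : Stmt7Aux.PP L = (List.ofFn fun j => x j ^ i j).prod := by
      simp [Stmt7Aux.PP, hL, List.map_ofFn, Function.comp_def]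
    have hgen : e * mitc e L ∈ S := ⟨i, fun j => le_refl _, Or.inr rfl⟩
    have hE := Stmt7Aux.lemE L e
    have h2 : e * (mitc e L - e * Stmt7Aux.PP L) * 1 ∈ AddSubgroup.closure S := by
      refine Stmt7Aux.conj_mem_closure e 1 ?_ hE
      rintro s ⟨w, M, hM, hne, rfl⟩
      have hlen : M.length = n := by simpa [hL] using hM.length_eq
      have hget := (List.forall₂_iff_get.mp hM).2
      set k : Fin n → ℕ := fun j => (M.get ⟨j.1, by omega⟩).2 with hk
      have hboth : ∀ (j : Fin n),
          M.get ⟨j.1, by omega⟩ = (x j, k j) ∧ k j ≤ i j := by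
        intro j
        have h2' : (j : ℕ) < L.length := by simp [hL]
        have hj := hget j.1 (by omega) h2'
        have hLg : L.get ⟨j.1, h2'⟩ = (x j, i j) := by
          simp [hL, List.get_ofFn]
        rw [hLg] at hj
        exact ⟨Prod.ext hj.1 rfl, hj.2⟩
      have hk_le : ∀ j, k j ≤ i j := fun j => (hboth j).2
      have hM_eq : M = List.ofFn fun j => (x j, k j) := by
        refine List.ext_get (by simp [hlen]) fun j h1 h2' => ?_
        have hj : (⟨j, h1⟩ : Fin M.length) = ⟨(⟨j, by omega⟩ : Fin n).1, by omega⟩ := rfl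
        rw [hj, (hboth ⟨j, by omega⟩).1]
        simp [List.get_ofFn]
      have hk_ne : k ≠ i := by
        intro hki
        apply hne
        rw [hM_eq, hL, hki]
      obtain ⟨j0, hj0⟩ := Function.ne_iff.mp hk_ne
      have hsum : (∑ j, k j) < N := by
        rw [← hiN]
        exact Finset.sum_lt_sum (fun j _ => hk_le j)
          ⟨j0, Finset.mem_univ _, lt_of_le_of_ne (hk_le j0) hj0⟩
      have hrec := ih _ hsum k rfl
      have hsub : {y : R | ∃ k' : Fin n → ℕ, (∀ j, k' j ≤ k j) ∧
          ((∃ r : R, y = r * (e * mitc e (List.ofFn fun j => (x j, k' j)))) ∨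
            y = e * mitc e (List.ofFn fun j => (x j, k' j)))} ⊆ S := by
        rintro y ⟨k', hk'le, hy⟩
        exact ⟨k', fun j => (hk'le j).trans (hk_le j), hy⟩
      have hrec' : e * (List.ofFn fun j => x j ^ k j).prod ∈ AddSubgroup.closure S :=
        AddSubgroup.closure_mono hsub hrec
      have hPPM : Stmt7Aux.PP M = (List.ofFn fun j => x j ^ k j).prod := by
        rw [hM_eq]
        simp [Stmt7Aux.PP, List.map_ofFn, Function.comp_def]
      have key := Stmt7Aux.conj_mem_closure (e * w) 1 (habs (e * w)) hrec'
      have heq : e * (w * (e * Stmt7Aux.PP M)) * 1 =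
          (e * w) * (e * (List.ofFn fun j => x j ^ k j).prod) * 1 := by
        rw [← hPPM]; noncomm_ring
      rw [heq]
      exact key
    have h3 : e * mitc e L - e * Stmt7Aux.PP L ∈ AddSubgroup.closure S := by
      have heq : e * (mitc e L - e * Stmt7Aux.PP L) * 1 =
          e * mitc e L - e * Stmt7Aux.PP L := by
        rw [mul_one, mul_sub, ← mul_assoc, he]
      rwa [heq] at h2
    have h4 : e * Stmt7Aux.PP L ∈ AddSubgroup.closure S := by
      have := sub_mem (AddSubgroup.subset_closure hgen) h3
      simpa using this
    rwa [hPP] at h4
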